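/- Under a pure threshold strategy with threshold n₀ and constant service rate μ (i.e., μₘ = μ for all m), the solution of the first-step waiting time equations is W(n, m) = (n+1)/μ for all 0 ≤ n < m ≤ n₀. -/

import Mathlib

/-- Under a pure threshold strategy with threshold `n₀ ≥ 1` and constant
service rate `μ`, any solution of the first-step waiting time equations satisfies
`W n m = (n+1)/μ` for all `0 ≤ n < m ≤ n₀`. -/
theorem constant_rate_waiting_time
    (lam μ : ℝ) (hlam : 0 < lam) (hμ : 0 < μ)
    (n₀ : ℕ) (hn₀ : 1 ≤ n₀)
    (W : ℕ → ℕ → ℝ)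
    (hW1 : W 0 n₀ = 1 / μ)
    (hW2 : ∀ n, 1 ≤ n → n ≤ n₀ - 1 → W n n₀ = 1 / μ + W (n - 1) (n₀ - 1))
    (hW3 : ∀ m, 1 ≤ m → m ≤ n₀ - 1 →
      W 0 m = 1 / (lam + μ) + (lam / (lam + μ)) * W 0 (m + 1))
    (hW4 : ∀ n m, 1 ≤ n → n + 1 ≤ m → m ≤ n₀ - 1 →
      W n m = 1 / (lam + μ) + (lam / (lam + μ)) * W n (m + 1)
        + (μ / (lam + μ)) * W (n - 1) (m - 1)) :
    ∀ n m, n < m → m ≤ n₀ → W n m = ((n : ℝ) + 1) / μ := by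
  have hs : lam + μ ≠ 0 := by positivity
  have hμ' : μ ≠ 0 := ne_of_gt hμ
  have key : ∀ n k m, n < m → m + k = n₀ → W n m = ((n : ℝ) + 1) / μ := by
    intro n
    induction n with
    | zero =>
      intro k
      induction k with
      | zero =>
        intro m hm hk
        have hm' : m = n₀ := by omega
        rw [hm']
        simpa using hW1
      | succ k ihk =>
        intro m hm hk
        rw [hW3 m (by omega) (by omega), ihk (m + 1) (by omega) (by omega)]
        push_cast
        field_simp
        ring
    | succ n ihn =>
      intro k
      induction k with
      | zero =>
        intro m hm hk
        have hm' : m = n₀ := by omega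
        rw [hm', hW2 (n + 1) (by omega) (by omega)]
        have h := ihn 1 (n₀ - 1) (by omega) (by omega)
        simp only [Nat.add_sub_cancel]
        rw [h]
        push_cast
        field_simp
        ring
      | succ k ihk =>
        intro m hm hk
        rw [hW4 (n + 1) m (by omega) (by omega) (by omega),
          ihk (m + 1) (by omega) (by omega)]
        have h2 := ihn (k + 2) (m - 1) (by omega) (by omega)
        simp only [Nat.add_sub_cancel]
        rw [h2]
        push_cast
        field_simp
        ring
  intro n m hnm hmn
  exact key n (n₀ - m) m hnm (by omega)
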